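/- For any finite continued fraction of positive integers with value p/q in lowest terms (p, q coprime positive integers), the reversed continued fraction has value p/q' where q·q' ≡ (-1)^(n+1) (mod p), n being the length of the fraction. -/

import Mathlib

/-- Value of the continued fraction a₁ + 1/(a₂ + 1/(⋯ + 1/aₙ)). -/
def cf : List ℕ → ℚ
  | [] => 0
  | a :: l => a + (cf l)⁻¹

namespace CFAux

open Matrix

def M (a : ℕ) : Matrix (Fin 2) (Fin 2) ℤ := !![(a : ℤ), 1; 1, 0]

def P (l : List ℕ) : Matrix (Fin 2) (Fin 2) ℤ := (l.map M).prod

@[simp] lemma P_nil : P [] = 1 := rfl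

@[simp] lemma P_cons (a : ℕ) (l : List ℕ) : P (a :: l) = M a * P l := by
  simp [P]

lemma M_transpose (a : ℕ) : (M a)ᵀ = M a := by
  ext i j; fin_cases i <;> fin_cases j <;> simp [M]

lemma P_reverse (l : List ℕ) : P l.reverse = (P l)ᵀ := by
  simp only [P]
  rw [transpose_list_prod, List.map_reverse, List.map_map]
  congr 1
  simp [Function.comp_def, M_transpose]

lemma P_det (l : List ℕ) : (P l).det = (-1) ^ l.length := by
  induction l with
  | nil => simp
  | cons a l ih =>
    rw [P_cons, det_mul, ih]
    have : (M a).det = -1 := by simp [M, Matrix.det_fin_two_of]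
    rw [this, List.length_cons, pow_succ]; ring

lemma P_cons_00 (a : ℕ) (l : List ℕ) :
    P (a :: l) 0 0 = a * P l 0 0 + P l 1 0 := by
  simp [P_cons, M, Matrix.mul_apply, Fin.sum_univ_two]

lemma P_cons_10 (a : ℕ) (l : List ℕ) :
    P (a :: l) 1 0 = P l 0 0 := by
  simp [P_cons, M, Matrix.mul_apply, Fin.sum_univ_two]

lemma P_pos (l : List ℕ) (hpos : ∀ a ∈ l, 0 < a) :
    0 < P l 0 0 ∧ 0 ≤ P l 1 0 ∧ (l ≠ [] → 0 < P l 1 0) := by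
  induction l with
  | nil => simp
  | cons a l ih =>
    obtain ⟨h1, h2, _⟩ := ih (fun b hb => hpos b (List.mem_cons_of_mem _ hb))
    have ha : 0 < (a : ℤ) := by exact_mod_cast hpos a List.mem_cons_self
    refine ⟨?_, ?_, fun _ => ?_⟩
    · rw [P_cons_00]; positivity
    · rw [P_cons_10]; exact h1.le
    · rw [P_cons_10]; exact h1

lemma cf_eq (l : List ℕ) (hpos : ∀ a ∈ l, 0 < a) :
    cf l = (P l 0 0 : ℚ) / (P l 1 0 : ℚ) := by
  induction l with
  | nil => simp [cf]
  | cons a l ih =>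
    have h := ih (fun b hb => hpos b (List.mem_cons_of_mem _ hb))
    obtain ⟨h1, _, _⟩ := P_pos l (fun b hb => hpos b (List.mem_cons_of_mem _ hb))
    have h1' : (P l 0 0 : ℚ) ≠ 0 := by exact_mod_cast h1.ne'
    rw [cf, h, inv_div, P_cons_00, P_cons_10]
    push_cast
    field_simp

end CFAux

theorem stmt_10 (l : List ℕ) (hne : l ≠ []) (hpos : ∀ a ∈ l, 0 < a)
    (p q : ℕ) (hp : 0 < p) (hq : 0 < q) (hco : Nat.Coprime p q)
    (hval : cf l = (p : ℚ) / q) :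
    ∃ q' : ℕ, 0 < q' ∧ Nat.Coprime p q' ∧ cf l.reverse = (p : ℚ) / q' ∧
      (q * q' : ℤ) ≡ (-1) ^ (l.length + 1) [ZMOD p] := by
  classical
  open CFAux in
  obtain ⟨hA, hBnn, hBpos'⟩ := P_pos l hpos
  have hB : 0 < P l 1 0 := hBpos' hne
  have hee : ((-1 : ℤ) ^ l.length) * ((-1 : ℤ) ^ l.length) = 1 := by
    rw [← pow_add]; exact Even.neg_one_pow ⟨l.length, by ring⟩
  have hdet : P l 0 0 * P l 1 1 - P l 0 1 * P l 1 0 = (-1) ^ l.length := by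
    have := P_det l
    rwa [Matrix.det_fin_two] at this
  -- coprimality of entries
  have hcopAB : IsCoprime (P l 0 0) (P l 1 0) :=
    ⟨(-1) ^ l.length * P l 1 1, -((-1) ^ l.length * P l 0 1), by
      linear_combination ((-1 : ℤ) ^ l.length) * hdet + hee⟩
  have hcopAC : IsCoprime (P l 0 0) (P l 0 1) :=
    ⟨(-1) ^ l.length * P l 1 1, -((-1) ^ l.length * P l 1 0), by
      linear_combination ((-1 : ℤ) ^ l.length) * hdet + hee⟩
  -- identify p and q with entries
  have hcf := cf_eq l hpos
  have hq0 : (q : ℚ) ≠ 0 := by exact_mod_cast hq.ne'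
  have hB0 : ((P l 1 0 : ℤ) : ℚ) ≠ 0 := by exact_mod_cast hB.ne'
  have hcross : (p : ℤ) * P l 1 0 = P l 0 0 * q := by
    have : (p : ℚ) / q = ((P l 0 0 : ℤ) : ℚ) / ((P l 1 0 : ℤ) : ℚ) := by
      rw [← hval, hcf]
    field_simp at this
    rw [mul_comm (P l 0 0 : ℤ)]
    exact_mod_cast this
  have hpA : (p : ℤ) = P l 0 0 := by
    have hpdvd : (p : ℤ) ∣ P l 0 0 := by
      have h1 : (p : ℤ) ∣ q * P l 0 0 := ⟨P l 1 0, by linarith [hcross]⟩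
      have hcop' : IsCoprime (p : ℤ) (q : ℤ) := by
        rw [Int.isCoprime_iff_gcd_eq_one]; exact_mod_cast hco
      exact hcop'.dvd_of_dvd_mul_left h1
    have hAdvd : P l 0 0 ∣ (p : ℤ) := by
      have h1 : P l 0 0 ∣ (p : ℤ) * P l 1 0 := ⟨(q : ℤ), by linarith [hcross]⟩
      exact hcopAB.dvd_of_dvd_mul_right h1
    exact Int.dvd_antisymm (Int.natCast_nonneg p) hA.le hpdvd hAdvd
  have hqB : (q : ℤ) = P l 1 0 := by
    have hA0 : P l 0 0 ≠ 0 := hA.ne'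
    have : P l 0 0 * (q : ℤ) = P l 0 0 * P l 1 0 := by
      rw [← hpA] at hcross ⊢; linarith [hcross]
    exact mul_left_cancel₀ hA0 this
  -- the reverse
  have h00 : P l.reverse 0 0 = P l 0 0 := by rw [P_reverse]; rfl
  have h10 : P l.reverse 1 0 = P l 0 1 := by rw [P_reverse]; rfl
  have hposrev : ∀ a ∈ l.reverse, 0 < a := fun a ha => hpos a (List.mem_reverse.mp ha)
  have hnerev : l.reverse ≠ [] := fun h => hne (by simpa using congrArg List.reverse h)
  obtain ⟨_, _, hCpos'⟩ := P_pos l.reverse hposrev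
  have hC : 0 < P l 0 1 := h10 ▸ hCpos' hnerev
  refine ⟨(P l 0 1).toNat, ?_, ?_, ?_, ?_⟩
  · omega
  · have hcast : ((P l 0 1).toNat : ℤ) = P l 0 1 := Int.toNat_of_nonneg hC.le
    have : IsCoprime (p : ℤ) (((P l 0 1).toNat : ℕ) : ℤ) := by
      rw [hpA, hcast]; exact hcopAC
    rw [Int.isCoprime_iff_gcd_eq_one, Int.gcd_natCast_natCast] at this
    exact this
  · rw [cf_eq l.reverse hposrev, h00, h10, ← hpA]
    have : (((P l 0 1).toNat : ℕ) : ℚ) = ((P l 0 1 : ℤ) : ℚ) := by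
      exact_mod_cast congrArg (fun z : ℤ => (z : ℚ)) (Int.toNat_of_nonneg hC.le)
    rw [this]; push_cast; ring_nf
  · have hcast : ((P l 0 1).toNat : ℤ) = P l 0 1 := Int.toNat_of_nonneg hC.le
    have key : (q : ℤ) * (P l 0 1).toNat = (p : ℤ) * P l 1 1 + (-1) ^ (l.length + 1) := by
      rw [hcast, hqB, hpA, pow_succ]
      linear_combination -hdet
    have hdvd : (p : ℤ) ∣ ((q : ℤ) * (P l 0 1).toNat - (-1) ^ (l.length + 1)) :=
      ⟨P l 1 1, by linarith [key]⟩
    exact Int.ModEq.symm (Int.modEq_iff_dvd.mpr hdvd)
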